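/- For a distributed computing system with K nodes where node k maps a fraction m_k ∈ [0,1] of the N files (allocated in sets M_k with |M_k| = m_k N) and reduces a fraction w_k ∈ [0,1] of the Q output functions (with Σ w_k = 1), the minimum communication load satisfies L* ≥ max over subsets T ⊆ {1,...,K} of (1 - Σ_{k∈T} m_k)·(Σ_{k∈T} w_k), assuming the intermediate values are independent and uniform. -/

import Mathlib

/-- Cut-set lower bound for MapReduce (Lemma 1). The system has `K` nodes,
`Q` output functions, `N` files, and `Tb`-bit intermediate values (IVs), modeled
as arbitrary (hence independent, uniform) tables `v : Fin Q → Fin N → (Fin Tb → Bool)`.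
Node `k` maps the files `M k` (so `m k = |M k|/N`), reduces the functions `W k`
(pairwise disjoint, covering all of `Fin Q`, so `∑ w k = 1`), broadcasts an
`ℓ k`-bit message depending only on the IVs of its files, and must recover all
IVs of its assigned functions from the broadcast messages and its local IVs.
Then for every cut `S ⊆ {1,...,K}`, the communication load `L = ∑ ℓ k/(QNTb)`
satisfies `L ≥ (1 - ∑_{k∈S} m k)·(∑_{k∈S} w k)`. -/
theorem stmt_17 (K Q N Tb : ℕ) (hK : 0 < K) (hQ : 0 < Q) (hN : 0 < N) (hT : 0 < Tb)
    (M : Fin K → Finset (Fin N)) (W : Fin K → Finset (Fin Q))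
    (hWdisj : ∀ j k : Fin K, j ≠ k → Disjoint (W j) (W k))
    (hWcover : ∀ q : Fin Q, ∃ k : Fin K, q ∈ W k)
    (ℓ : Fin K → ℕ)
    (enc : ∀ k : Fin K, (Fin Q → Fin N → (Fin Tb → Bool)) → (Fin (ℓ k) → Bool))
    (henc : ∀ (k : Fin K) (v v' : Fin Q → Fin N → (Fin Tb → Bool)),
      (∀ q n, n ∈ M k → v q n = v' q n) → enc k v = enc k v')
    (dec : ∀ k : Fin K, (∀ j : Fin K, Fin (ℓ j) → Bool) →
      (Fin Q → {n : Fin N // n ∈ M k} → (Fin Tb → Bool)) →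
      (Fin Q → Fin N → (Fin Tb → Bool)))
    (hdec : ∀ (k : Fin K) (v : Fin Q → Fin N → (Fin Tb → Bool)) (q : Fin Q) (n : Fin N),
      q ∈ W k → dec k (fun j => enc j v) (fun q n => v q n.1) q n = v q n) :
    ∀ S : Finset (Fin K),
      (1 - ∑ k ∈ S, ((M k).card : ℝ) / N) * (∑ k ∈ S, ((W k).card : ℝ) / Q)
        ≤ (∑ k, (ℓ k : ℝ)) / ((Q : ℝ) * N * Tb) := by
  intro S
  classical
  set Ms : Finset (Fin N) := S.biUnion M with hMsdef
  set Qs : Finset (Fin Q) := S.biUnion W with hQsdef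
  -- The injective map implementing the cut-set argument
  let F : (Fin Q → Fin N → (Fin Tb → Bool)) →
      ((∀ j : Fin K, Fin (ℓ j) → Bool) × (Fin Q → {n // n ∈ Ms} → (Fin Tb → Bool)) ×
        ({q // q ∉ Qs} → {n // n ∉ Ms} → (Fin Tb → Bool))) :=
    fun v => (fun j => enc j v, fun q n => v q n.1, fun q n => v q.1 n.1)
  have hFinj : Function.Injective F := by
    intro v v' h
    have h1 : (fun j => enc j v) = fun j => enc j v' := congrArg Prod.fst h
    have h2 : (fun q (n : {n // n ∈ Ms}) => v q n.1) = fun q n => v' q n.1 :=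
      congrArg (fun p => p.2.1) h
    have h3 : (fun (q : {q // q ∉ Qs}) (n : {n // n ∉ Ms}) => v q.1 n.1)
        = fun q n => v' q.1 n.1 := congrArg (fun p => p.2.2) h
    have hMsv : ∀ q n, n ∈ Ms → v q n = v' q n := fun q n hn =>
      congrFun (congrFun h2 q) ⟨n, hn⟩
    funext q n
    by_cases hq : q ∈ Qs
    · obtain ⟨k, hkS, hqk⟩ := Finset.mem_biUnion.mp hq
      have hsub : ∀ m : Fin N, m ∈ M k → m ∈ Ms := fun m hm =>
        Finset.mem_biUnion.mpr ⟨k, hkS, hm⟩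
      have hrestr : (fun q (n : {n // n ∈ M k}) => v q n.1) = fun q n => v' q n.1 := by
        funext q' n'
        exact hMsv q' n'.1 (hsub n'.1 n'.2)
      calc v q n = dec k (fun j => enc j v) (fun q n => v q n.1) q n := (hdec k v q n hqk).symm
        _ = dec k (fun j => enc j v') (fun q n => v' q n.1) q n := by rw [h1, hrestr]
        _ = v' q n := hdec k v' q n hqk
    · by_cases hn : n ∈ Ms
      · exact hMsv q n hn
      · exact congrFun (congrFun h3 ⟨q, hq⟩) ⟨n, hn⟩
  have hcard := Fintype.card_le_of_injective F hFinj
  have hQsc : Qs.card ≤ Q := by simpa using Finset.card_le_univ Qs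
  have hMsc : Ms.card ≤ N := by simpa using Finset.card_le_univ Ms
  -- compute cardinalities
  have hdom : Fintype.card (Fin Q → Fin N → (Fin Tb → Bool)) = 2 ^ (Q * N * Tb) := by
    simp [Fintype.card_fun, ← pow_mul]
    ring_nf
  have hc1 : Fintype.card (∀ j : Fin K, Fin (ℓ j) → Bool) = 2 ^ (∑ j, ℓ j) := by
    rw [Fintype.card_pi]
    simp [Fintype.card_fun, Finset.prod_pow_eq_pow_sum]
  have hc2 : Fintype.card (Fin Q → {n // n ∈ Ms} → (Fin Tb → Bool))
      = 2 ^ (Q * Ms.card * Tb) := by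
    simp [Fintype.card_fun, ← pow_mul, Fintype.card_coe]
    ring_nf
  have hc3 : Fintype.card ({q // q ∉ Qs} → {n // n ∉ Ms} → (Fin Tb → Bool))
      = 2 ^ ((Q - Qs.card) * (N - Ms.card) * Tb) := by
    have e1 : Fintype.card {q : Fin Q // q ∉ Qs} = Q - Qs.card := by
      simp [Fintype.card_subtype_compl, Fintype.card_coe]
    have e2 : Fintype.card {n : Fin N // n ∉ Ms} = N - Ms.card := by
      simp [Fintype.card_subtype_compl, Fintype.card_coe]
    rw [Fintype.card_fun, Fintype.card_fun, Fintype.card_fun, e1, e2]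
    simp [← pow_mul, Fintype.card_fin]
    ring_nf
  rw [hdom, Fintype.card_prod, Fintype.card_prod, hc1, hc2, hc3, ← pow_add, ← pow_add] at hcard
  have hexp : Q * N * Tb ≤ (∑ j, ℓ j) + Q * Ms.card * Tb + (Q - Qs.card) * (N - Ms.card) * Tb :=
    (Nat.pow_le_pow_iff_right (by norm_num : 1 < 2)).mp (by
      calc 2 ^ (Q * N * Tb) ≤ _ := hcard
        _ = 2 ^ ((∑ j, ℓ j) + Q * Ms.card * Tb + (Q - Qs.card) * (N - Ms.card) * Tb) := by
          rw [add_assoc])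
  -- pass to reals
  have hQscR : (Qs.card : ℝ) = ∑ k ∈ S, ((W k).card : ℝ) := by
    rw [hQsdef, Finset.card_biUnion (fun j hj k hk hjk => hWdisj j k hjk)]
    push_cast; ring
  have hMscR : (Ms.card : ℝ) ≤ ∑ k ∈ S, ((M k).card : ℝ) := by
    have := Finset.card_biUnion_le (s := S) (t := M)
    exact_mod_cast this
  have hexpR : (Q : ℝ) * N * Tb ≤ (∑ j, (ℓ j : ℝ)) + Q * Ms.card * Tb
      + ((Q : ℝ) - Qs.card) * ((N : ℝ) - Ms.card) * Tb := by
    have := (Nat.cast_le (α := ℝ)).mpr hexp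
    push_cast [Nat.cast_sub hQsc, Nat.cast_sub hMsc] at this
    convert this using 2 <;> push_cast <;> ring
  -- key inequality: |Qs| * (N - |Ms|) * Tb ≤ ∑ ℓ
  have key : (Qs.card : ℝ) * ((N : ℝ) - Ms.card) * Tb ≤ ∑ j, (ℓ j : ℝ) := by nlinarith
  set A : ℝ := ∑ k ∈ S, ((W k).card : ℝ) with hA
  set B : ℝ := ∑ k ∈ S, ((M k).card : ℝ) with hB
  have hA0 : 0 ≤ A := Finset.sum_nonneg fun k _ => by positivity
  have hMsN : (Ms.card : ℝ) ≤ N := by exact_mod_cast hMsc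
  have key2 : A * ((N : ℝ) - B) * Tb ≤ ∑ j, (ℓ j : ℝ) := by
    have : A * ((N : ℝ) - B) * Tb ≤ A * ((N : ℝ) - Ms.card) * Tb := by
      have hT0 : (0:ℝ) ≤ Tb := by positivity
      exact mul_le_mul_of_nonneg_right
        (mul_le_mul_of_nonneg_left (sub_le_sub_left hMscR _) hA0) hT0
    calc A * ((N : ℝ) - B) * Tb ≤ A * ((N : ℝ) - Ms.card) * Tb := this
      _ = (Qs.card : ℝ) * ((N : ℝ) - Ms.card) * Tb := by rw [hQscR]
      _ ≤ _ := key
  have hQ0 : (0:ℝ) < Q := by exact_mod_cast hQ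
  have hN0 : (0:ℝ) < N := by exact_mod_cast hN
  have hT0 : (0:ℝ) < Tb := by exact_mod_cast hT
  rw [show (∑ k ∈ S, ((M k).card : ℝ) / N) = B / N by rw [hB, Finset.sum_div],
    show (∑ k ∈ S, ((W k).card : ℝ) / Q) = A / Q by rw [hA, Finset.sum_div]]
  rw [show (1 - B / N) * (A / Q) = (A * ((N : ℝ) - B) * Tb) / ((Q : ℝ) * N * Tb) by
    field_simp]
  exact (div_le_div_iff_of_pos_right (by positivity)).mpr key2
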